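/- For every ζ ∈ (0, ζ₀) there exists f > 0 such that for every w ∈ ℂ with 1 < |w| < 1/√ζ + f one has |g(w)| < |w|². -/

import Mathlib

/-- `g ζ w = (ζ − w)/(ζw − 1)`. -/
noncomputable def gmap (ζ : ℝ) (w : ℂ) : ℂ := ((ζ : ℂ) - w) / ((ζ : ℂ) * w - 1)

lemma key_ineq (ζ r x y : ℝ) (hζ0 : 0 < ζ) (hr1 : 1 < r) (hx : x ≤ r)
    (hr2 : x ^ 2 + y ^ 2 = r ^ 2) (hB : ζ * r ^ 2 - (1 - ζ) * r + ζ < 0) :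
    (ζ - x) ^ 2 + y ^ 2 < r ^ 4 * ((ζ * x - 1) ^ 2 + (ζ * y) ^ 2) := by
  have hr0 : 0 < r := by linarith
  have hA : ζ * r ^ 2 - (1 + ζ) * r + ζ < 0 := by nlinarith [mul_pos hζ0 hr0]
  have hQ : 0 < (ζ * r ^ 2 - (1 + ζ) * r + ζ) * (ζ * r ^ 2 - (1 - ζ) * r + ζ) :=
    mul_pos_of_neg_of_neg hA hB
  have h1 : 0 < r ^ 2 - 1 := by nlinarith
  have hprod : 0 < (r ^ 2 - 1) * ((ζ * r ^ 2 - (1 + ζ) * r + ζ) * (ζ * r ^ 2 - (1 - ζ) * r + ζ)) :=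
    mul_pos h1 hQ
  have h4 : 0 ≤ r ^ 4 - 1 := by nlinarith
  have hxr : 0 ≤ (r - x) * (2 * ζ * (r ^ 4 - 1)) := by
    apply mul_nonneg (by linarith)
    positivity
  have hL : (ζ - x) ^ 2 + y ^ 2 = ζ ^ 2 - 2 * ζ * x + r ^ 2 := by linear_combination hr2
  have hR : r ^ 4 * ((ζ * x - 1) ^ 2 + (ζ * y) ^ 2)
      = r ^ 4 * (ζ ^ 2 * r ^ 2 - 2 * ζ * x + 1) := by
    linear_combination ζ ^ 2 * r ^ 4 * hr2
  rw [hL, hR]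
  nlinarith [hprod, hxr]

/-- For every `ζ ∈ (0, ζ₀)` (with `ζ₀ = s₀²`, `s₀` the real root of `s³ + s² + s − 1 = 0`
in `(0,1)`) there is `f > 0` such that `|g(w)| < |w|²` whenever `1 < |w| < 1/√ζ + f`. -/
theorem stmt15 (s₀ : ℝ) (hs₀0 : 0 < s₀) (hs₀1 : s₀ < 1)
    (hs₀ : s₀ ^ 3 + s₀ ^ 2 + s₀ - 1 = 0)
    (ζ : ℝ) (hζ0 : 0 < ζ) (hζ : ζ < s₀ ^ 2) :
    ∃ f : ℝ, 0 < f ∧ ∀ w : ℂ, 1 < ‖w‖ →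
      ‖w‖ < 1 / Real.sqrt ζ + f →
      ‖gmap ζ w‖ < ‖w‖ ^ 2 := by
  set s := Real.sqrt ζ with hsdef
  have hs0 : 0 < s := Real.sqrt_pos.mpr hζ0
  have hsq : s ^ 2 = ζ := Real.sq_sqrt hζ0.le
  clear_value s
  have hss0 : s < s₀ := by nlinarith
  have hkey : s ^ 3 + s ^ 2 + s < 1 := by nlinarith [mul_pos hs0 hs0, mul_pos hs₀0 hs₀0]
  have hζ3 : 3 * ζ < 1 := by nlinarith
  have hζ1 : ζ < 1 := by linarith
  set D : ℝ := (1 - ζ) ^ 2 - 4 * ζ ^ 2 with hDdef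
  have hD : 0 < D := by rw [hDdef]; nlinarith
  have hD1 : D < 1 := by rw [hDdef]; nlinarith
  set q : ℝ := Real.sqrt D with hqdef
  have hq0 : 0 < q := Real.sqrt_pos.mpr hD
  have hq2 : q ^ 2 = D := Real.sq_sqrt hD.le
  clear_value q
  clear_value D
  set rp : ℝ := ((1 - ζ) + q) / (2 * ζ) with hrpdef
  have h2 : 2 * ζ * rp = (1 - ζ) + q := by
    rw [hrpdef]; field_simp
  clear_value rp
  have h40 : 4 * ζ * (ζ * rp ^ 2 - (1 - ζ) * rp + ζ) = 0 := by
    linear_combination (2 * ζ * rp - (1 - ζ) + q) * h2 + hq2 + hDdef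
  have hroot : ζ * rp ^ 2 - (1 - ζ) * rp + ζ = 0 := by
    have h4ne : (4 * ζ) ≠ 0 := by positivity
    exact (mul_eq_zero.mp h40).resolve_left h4ne
  have hgap0 : (2 * s - (1 - ζ)) ^ 2 < q ^ 2 := by
    rw [hq2, hDdef]
    nlinarith [mul_pos hs0 (show (0:ℝ) < 1 - s - s ^ 2 - s ^ 3 by linarith), hsq]
  have hqc : 2 * s - (1 - ζ) < q := lt_of_pow_lt_pow_left₀ 2 hq0.le hgap0
  have h2s : 1 / s * (2 * ζ) = 2 * s := by
    field_simp
    linear_combination (-1 : ℝ) * hsq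
  have hrpgt : 1 / s < rp := by
    have h' : 1 / s * (2 * ζ) < rp * (2 * ζ) := by rw [h2s, mul_comm]; linarith
    exact lt_of_mul_lt_mul_right h' (by positivity)
  have hs1 : s < 1 := lt_trans hss0 hs₀1
  have h1s : 1 < 1 / s := by rw [lt_div_iff₀ hs0]; linarith
  have hrp1 : 1 < rp := lt_trans h1s hrpgt
  have hq1 : q < 1 := lt_of_pow_lt_pow_left₀ 2 zero_le_one (by rw [hq2]; simpa using hD1)
  have hrpζ : rp * ζ < 1 := by
    have h3 : 2 * ζ * rp < 2 := by linarith
    rw [mul_comm]; linarith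
  refine ⟨rp - 1 / s, by linarith, ?_⟩
  intro w hw1 hw2
  have hwrp : ‖w‖ < rp := by
    have : 1 / s + (rp - 1 / s) = rp := by ring
    rw [this] at hw2; exact hw2
  set r : ℝ := ‖w‖ with hrdef
  have hr1 : 1 < r := hw1
  have hζr : ζ * r < 1 := by
    have := mul_lt_mul_of_pos_left hwrp hζ0
    have h' : ζ * rp = rp * ζ := mul_comm _ _
    linarith
  have habsζw : ‖(ζ : ℂ) * w‖ = ζ * r := by
    rw [norm_mul, Complex.norm_real, Real.norm_eq_abs, abs_of_pos hζ0]
  have hden : 0 < ‖(ζ : ℂ) * w - 1‖ := by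
    have h := norm_sub_norm_le (1 : ℂ) ((ζ : ℂ) * w)
    rw [norm_one, habsζw, norm_sub_rev] at h
    linarith
  -- factorization showing B(r) < 0
  have hfac : (ζ * r ^ 2 - (1 - ζ) * r + ζ) * rp = ζ * (rp - r) * (1 - r * rp) := by
    linear_combination r * hroot
  have hrrp : 1 < r * rp := lt_of_lt_of_le hr1 (le_mul_of_one_le_right (by linarith) hrp1.le)
  have hBrp : (ζ * r ^ 2 - (1 - ζ) * r + ζ) * rp < 0 := by
    rw [hfac]
    exact mul_neg_of_pos_of_neg (mul_pos hζ0 (sub_pos.mpr hwrp)) (by linarith)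
  have hB : ζ * r ^ 2 - (1 - ζ) * r + ζ < 0 := by
    by_contra h
    push_neg at h
    exact absurd hBrp (not_lt.mpr (mul_nonneg h (by linarith : (0:ℝ) ≤ rp)))
  have hx : w.re ≤ r := Complex.re_le_norm w
  have hr2 : w.re ^ 2 + w.im ^ 2 = r ^ 2 := by
    rw [hrdef, Complex.sq_norm, Complex.normSq_apply]; ring
  have hmain := key_ineq ζ r w.re w.im hζ0 hr1 hx hr2 hB
  rw [gmap, norm_div, div_lt_iff₀ hden]
  have hnum : ‖(ζ : ℂ) - w‖ ^ 2 = (ζ - w.re) ^ 2 + w.im ^ 2 := by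
    rw [Complex.sq_norm, Complex.normSq_apply]
    simp [Complex.sub_re, Complex.sub_im]
    ring
  have hden2 : ‖(ζ : ℂ) * w - 1‖ ^ 2 = (ζ * w.re - 1) ^ 2 + (ζ * w.im) ^ 2 := by
    rw [Complex.sq_norm, Complex.normSq_apply]
    simp [Complex.sub_re, Complex.sub_im, Complex.mul_re, Complex.mul_im]
    ring
  have hfin : ‖(ζ : ℂ) - w‖ ^ 2 < (r ^ 2 * ‖(ζ : ℂ) * w - 1‖) ^ 2 := by
    rw [hnum, mul_pow, hden2]
    calc (ζ - w.re) ^ 2 + w.im ^ 2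
        < r ^ 4 * ((ζ * w.re - 1) ^ 2 + (ζ * w.im) ^ 2) := hmain
      _ = (r ^ 2) ^ 2 * ((ζ * w.re - 1) ^ 2 + (ζ * w.im) ^ 2) := by ring
  have h0 : 0 ≤ r ^ 2 * ‖(ζ : ℂ) * w - 1‖ := by positivity
  exact lt_of_pow_lt_pow_left₀ 2 h0 hfin
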